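/- arXiv:1703.07710 — 4 statements merged into one kernel-verified Lean document; each statement's English description precedes it below -/
import Mathlib

section
/- Let $a_1, a_2, \ldots, a_m$ be a sequence of real numbers each taking values in $[a_{\min}, 1]$ with $a_{\min} > 0$ and $m > 0$. Then $\sum_{k=1}^m \frac{a_k}{\sum_{i=1}^k a_i} \leq \ln\left(\frac{m e}{a_{\min}}\right)$. -/
theorem stmt_0 (m : ℕ) (hm : 0 < m) (a : ℕ → ℝ) (amin : ℝ) (hamin : 0 < amin)
    (hb : ∀ k, 1 ≤ k → k ≤ m → a k ∈ Set.Icc amin 1) :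
    ∑ k ∈ Finset.Icc 1 m, a k / (∑ i ∈ Finset.Icc 1 k, a i)
      ≤ Real.log (m * Real.exp 1 / amin) := by
  set S : ℕ → ℝ := fun n => ∑ i ∈ Finset.Icc 1 n, a i with hS
  have hSlb : ∀ n, 1 ≤ n → n ≤ m → amin ≤ S n := by
    intro n h1 h2
    have : (Finset.Icc 1 n).card • amin ≤ S n := by
      apply Finset.card_nsmul_le_sum
      intro i hi
      simp only [Finset.mem_Icc] at hi
      exact (hb i hi.1 (hi.2.trans h2)).1
    have hcard : (Finset.Icc 1 n).card = n := by simp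
    rw [hcard] at this
    calc amin = 1 * amin := by ring
      _ ≤ (n : ℝ) * amin := by
          apply mul_le_mul_of_nonneg_right _ hamin.le
          exact_mod_cast h1
      _ ≤ S n := by simpa [nsmul_eq_mul] using this
  have hSpos : ∀ n, 1 ≤ n → n ≤ m → 0 < S n := fun n h1 h2 =>
    lt_of_lt_of_le hamin (hSlb n h1 h2)
  have key : ∀ n, 1 ≤ n → n ≤ m →
      (∑ k ∈ Finset.Icc 1 n, a k / S k) ≤ 1 + Real.log (S n) - Real.log amin := by
    intro n h1
    induction n, h1 using Nat.le_induction with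
    | base =>
      intro hle
      have hS1 : S 1 = a 1 := by simp [hS]
      have ha1 : 0 < a 1 := lt_of_lt_of_le hamin (hb 1 le_rfl hle).1
      have : Real.log amin ≤ Real.log (S 1) := by
        rw [hS1]
        exact Real.log_le_log hamin (hb 1 le_rfl hle).1
      rw [show (Finset.Icc 1 1) = {1} by rfl]
      rw [hS1] at this
      simp [hS1, div_self ha1.ne']
      linarith
    | succ n hn ih =>
      intro hle
      have hnm : n ≤ m := le_of_lt (Nat.lt_of_lt_of_le (Nat.lt_succ_self n) hle)
      have hSn : 0 < S n := hSpos n hn hnm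
      have hSn1 : 0 < S (n+1) := hSpos (n+1) (by omega) hle
      have hsucc : S (n+1) = S n + a (n+1) := by
        simp only [hS]
        rw [Finset.sum_Icc_succ_top (by omega : 1 ≤ n + 1)]
      have han1 : 0 < a (n+1) := lt_of_lt_of_le hamin (hb (n+1) (by omega) hle).1
      -- a(n+1)/S(n+1) ≤ log S(n+1) - log S n
      have hstep : a (n+1) / S (n+1) ≤ Real.log (S (n+1)) - Real.log (S n) := by
        have hlog : Real.log (S n / S (n+1)) ≤ S n / S (n+1) - 1 :=
          Real.log_le_sub_one_of_pos (div_pos hSn hSn1)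
        rw [Real.log_div hSn.ne' hSn1.ne'] at hlog
        have : S n / S (n+1) - 1 = - (a (n+1) / S (n+1)) := by
          field_simp
          linarith [hsucc]
        rw [this] at hlog
        linarith
      rw [Finset.sum_Icc_succ_top (by omega : 1 ≤ n + 1)]
      have := ih hnm
      linarith
  have hmain := key m hm le_rfl
  have hSub : S m ≤ (m : ℝ) := by
    have : S m ≤ (Finset.Icc 1 m).card • (1:ℝ) := by
      apply Finset.sum_le_card_nsmul
      intro i hi
      simp only [Finset.mem_Icc] at hi
      exact (hb i hi.1 hi.2).2
    simpa using this
  have hlogS : Real.log (S m) ≤ Real.log m :=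
    Real.log_le_log (hSpos m hm le_rfl) hSub
  have hrhs : Real.log (m * Real.exp 1 / amin)
      = Real.log m + 1 - Real.log amin := by
    have hm' : (m:ℝ) ≠ 0 := by positivity
    rw [Real.log_div (by positivity) hamin.ne', Real.log_mul hm' (Real.exp_ne_zero 1),
      Real.log_exp]
  rw [hrhs]
  linarith
end

section
/- Let $\{\mathcal{F}_i\}$ be a filtration and $X_1, X_2, \ldots$ Bernoulli random variables with $\mathbb{P}(X_i = 1 \mid \mathcal{F}_{i-1}) = P_i$, where $P_i$ is $\mathcal{F}_{i-1}$-measurable and $X_i$ is $\mathcal{F}_i$-measurable. Then for any $W > 0$: $\mathbb{P}\left(\exists n : \sum_{t=1}^n X_t < \frac{1}{2}\sum_{t=1}^n P_t - W\right) \leq e^{-W}$. -/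
open MeasureTheory Finset
open scoped NNReal ENNReal

section VilleAux

variable {Ω : Type*} {m0 : MeasurableSpace Ω} {μ : Measure Ω} {𝒢 : Filtration ℕ m0}
  {f : ℕ → Ω → ℝ}

lemma ville_fin [IsFiniteMeasure μ] (hf : Supermartingale f 𝒢 μ)
    (hnonneg : ∀ n ω, 0 ≤ f n ω) (ε : ℝ≥0) (n : ℕ) :
    ε • μ {ω | (ε : ℝ) ≤ (range (n + 1)).sup' nonempty_range_add_one fun k => f k ω} ≤
      ENNReal.ofReal (∫ ω, f 0 ω ∂μ) := by
  set τ : Ω → WithTop ℕ := fun ω => (hittingBtwn f {y : ℝ | (ε : ℝ) ≤ y} 0 n ω : ℕ) with hτdef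
  have hτ : IsStoppingTime 𝒢 τ :=
    Adapted.isStoppingTime_hittingBtwn hf.stronglyAdapted.adapted measurableSet_Ici
  have hτle : ∀ ω, τ ω ≤ n := fun ω => WithTop.coe_le_coe.mpr (hittingBtwn_le ω)
  have hint : Integrable (stoppedValue f τ) μ :=
    integrable_stoppedValue ℕ hτ hf.integrable hτle
  have hn : Set.Icc 0 n = {k | k ≤ n} := by ext x; simp
  have hkey : ∀ ω, ((ε : ℝ) ≤ (range (n + 1)).sup' nonempty_range_add_one fun k => f k ω) →
      (ε : ℝ) ≤ stoppedValue f τ ω := by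
    intro x hx
    simp_rw [le_sup'_iff, mem_range, Nat.lt_succ_iff] at hx
    refine stoppedValue_hittingBtwn_mem ?_
    simp only [Set.mem_setOf_eq, exists_prop, hn]
    exact let ⟨j, hj₁, hj₂⟩ := hx; ⟨j, hj₁, hj₂⟩
  have hmeas : MeasurableSet
      {ω | (ε : ℝ) ≤ (range (n + 1)).sup' nonempty_range_add_one fun k => f k ω} :=
    measurableSet_le measurable_const
      (Finset.measurable_range_sup'' fun k _ =>
        (hf.stronglyMeasurable k).measurable.le (𝒢.le k))
  have h1 := setIntegral_ge_of_const_le_real hmeas (measure_ne_top _ _) hkey hint.integrableOn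
  have h2 : ∫ ω in {ω | (ε : ℝ) ≤ (range (n + 1)).sup' nonempty_range_add_one fun k => f k ω},
      stoppedValue f τ ω ∂μ ≤ ∫ ω, stoppedValue f τ ω ∂μ :=
    setIntegral_le_integral hint (Filter.Eventually.of_forall fun ω => hnonneg _ _)
  have h3 : ∫ ω, stoppedValue f τ ω ∂μ ≤ ∫ ω, f 0 ω ∂μ := by
    have hmono := hf.neg.expected_stoppedValue_mono (isStoppingTime_const 𝒢 0) hτ
      (fun ω => WithTop.coe_le_coe.mpr (Nat.zero_le _)) hτle
    have hsv : stoppedValue (-f) τ = fun ω => -(stoppedValue f τ ω) := rfl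
    have hsv0 : stoppedValue (-f) (fun _ => WithTop.some (0 : ℕ)) = fun ω => -(f 0 ω) := rfl
    rw [hsv, hsv0, integral_neg, integral_neg, neg_le_neg_iff] at hmono
    exact hmono
  rw [ENNReal.le_ofReal_iff_toReal_le, ENNReal.toReal_smul]
  · calc (ε : ℝ) * (μ {ω | (ε : ℝ) ≤ (range (n + 1)).sup' nonempty_range_add_one
          fun k => f k ω}).toReal ≤ _ := h1
      _ ≤ ∫ ω, stoppedValue f τ ω ∂μ := h2
      _ ≤ ∫ ω, f 0 ω ∂μ := h3
  · exact ENNReal.mul_ne_top (by simp) (measure_ne_top _ _)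
  · exact integral_nonneg fun ω => hnonneg _ _

lemma ville [IsFiniteMeasure μ] (hf : Supermartingale f 𝒢 μ)
    (hnonneg : ∀ n ω, 0 ≤ f n ω) (ε : ℝ≥0) :
    ε • μ {ω | ∃ k, (ε : ℝ) ≤ f k ω} ≤ ENNReal.ofReal (∫ ω, f 0 ω ∂μ) := by
  have hun : {ω | ∃ k, (ε : ℝ) ≤ f k ω} =
      ⋃ n, {ω | (ε : ℝ) ≤ (range (n + 1)).sup' nonempty_range_add_one fun k => f k ω} := by
    ext ω
    simp only [Set.mem_setOf_eq, Set.mem_iUnion, le_sup'_iff, mem_range, Nat.lt_succ_iff]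
    constructor
    · rintro ⟨k, hk⟩; exact ⟨k, k, le_rfl, hk⟩
    · rintro ⟨n, k, -, hk⟩; exact ⟨k, hk⟩
  have hmono : Monotone fun n =>
      {ω | (ε : ℝ) ≤ (range (n + 1)).sup' nonempty_range_add_one fun k => f k ω} := by
    intro a b hab ω hω
    simp only [Set.mem_setOf_eq, le_sup'_iff, mem_range, Nat.lt_succ_iff] at hω ⊢
    obtain ⟨k, hk, hk'⟩ := hω
    exact ⟨k, hk.trans hab, hk'⟩
  rw [hun, hmono.measure_iUnion, ENNReal.smul_def, smul_eq_mul, ENNReal.mul_iSup]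
  exact iSup_le fun n => by
    have := ville_fin hf hnonneg ε n
    rwa [ENNReal.smul_def, smul_eq_mul] at this

end VilleAux


private lemma aux_split (a b q x : ℝ) (hx : x = 0 ∨ x = 1) :
    Real.exp ((a + q) / 2 - (b + x)) =
      Real.exp (a / 2 + q / 2 - b) -
        (1 - Real.exp (-1)) * (Real.exp (a / 2 + q / 2 - b) * x) := by
  rcases hx with h | h
  · rw [h]
    rw [show Real.exp (a / 2 + q / 2 - b) - (1 - Real.exp (-1)) *
        (Real.exp (a / 2 + q / 2 - b) * 0) = Real.exp (a / 2 + q / 2 - b) by ring]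
    congr 1
    ring
  · rw [h]
    rw [show Real.exp (a / 2 + q / 2 - b) - (1 - Real.exp (-1)) *
        (Real.exp (a / 2 + q / 2 - b) * 1) =
        Real.exp (-1) * Real.exp (a / 2 + q / 2 - b) by ring, ← Real.exp_add]
    congr 1
    ring

private lemma aux_factor (a b q : ℝ) :
    Real.exp (a / 2 + q / 2 - b) = Real.exp (a / 2 - b) * Real.exp (q / 2) := by
  rw [← Real.exp_add]
  congr 1
  ring

theorem stmt_8 {Ω : Type*} {m0 : MeasurableSpace Ω} (μ : Measure Ω)
    [IsProbabilityMeasure μ] (ℱ : Filtration ℕ m0)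
    (X : ℕ → Ω → ℝ) (p : ℕ → Ω → ℝ)
    (h01 : ∀ i ω, X i ω = 0 ∨ X i ω = 1)
    (hadapted : Adapted ℱ X)
    (hpred : ∀ i : ℕ, 1 ≤ i → StronglyMeasurable[ℱ (i - 1)] (p i))
    (hcond : ∀ i : ℕ, 1 ≤ i → μ[X i | ℱ (i - 1)] =ᵐ[μ] p i)
    (W : ℝ) (hW : 0 < W) :
    μ {ω | ∃ n : ℕ, 1 ≤ n ∧
        ∑ t ∈ Finset.Icc 1 n, X t ω < (∑ t ∈ Finset.Icc 1 n, p t ω) / 2 - W}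
      ≤ ENNReal.ofReal (Real.exp (-W)) := by
  classical
  set c : ℝ := 1 - Real.exp (-1) with hc
  set M : ℕ → Ω → ℝ := fun n ω =>
    Real.exp ((∑ t ∈ Finset.Icc 1 n, p t ω) / 2 - ∑ t ∈ Finset.Icc 1 n, X t ω) with hM
  have hX01 : ∀ i ω, 0 ≤ X i ω ∧ X i ω ≤ 1 := fun i ω => by
    rcases h01 i ω with h | h <;> simp [h]
  have hXint : ∀ i, Integrable (X i) μ := by
    intro i
    refine ⟨((hadapted i).mono (ℱ.le i) le_rfl).aestronglyMeasurable,
      HasFiniteIntegral.of_bounded (C := 1) (Filter.Eventually.of_forall fun ω => ?_)⟩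
    rcases h01 i ω with h | h <;> simp [h]
  -- a.e. bounds on p
  have hp01 : ∀ i : ℕ, 1 ≤ i → ∀ᵐ ω ∂μ, 0 ≤ p i ω ∧ p i ω ≤ 1 := by
    intro i hi
    have h0 : (0 : Ω → ℝ) ≤ᵐ[μ] μ[X i | ℱ (i - 1)] :=
      condExp_nonneg (Filter.Eventually.of_forall fun ω => (hX01 i ω).1)
    have h1 : μ[X i | ℱ (i - 1)] ≤ᵐ[μ] μ[(fun _ => (1 : ℝ)) | ℱ (i - 1)] :=
      condExp_mono (hXint i) (integrable_const 1)
        (Filter.Eventually.of_forall fun ω => (hX01 i ω).2)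
    have hconst : μ[(fun _ => (1 : ℝ)) | ℱ (i - 1)] = fun _ => (1 : ℝ) :=
      condExp_const (ℱ.le (i - 1)) 1
    filter_upwards [h0, h1, hcond i hi] with ω h0ω h1ω hpω
    rw [hconst] at h1ω
    constructor
    · rw [← hpω]; exact h0ω
    · rw [← hpω]; exact h1ω
  have hpae : ∀ N : ℕ, ∀ᵐ ω ∂μ, ∀ t ∈ Finset.Icc 1 N, 0 ≤ p t ω ∧ p t ω ≤ 1 := by
    intro N
    rw [Finset.eventually_all]
    intro t ht
    exact hp01 t (Finset.mem_Icc.mp ht).1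
  -- adaptedness of M
  have hpsum_meas : ∀ n N : ℕ, N ≤ n → Measurable[ℱ n] (fun ω => ∑ t ∈ Finset.Icc 1 N, p t ω) := by
    intro n N hNn
    apply Finset.measurable_sum
    intro t ht
    obtain ⟨h1t, h2t⟩ := Finset.mem_Icc.mp ht
    exact ((hpred t h1t).mono (ℱ.mono (by omega))).measurable
  have hXsum_meas : ∀ n N : ℕ, N ≤ n → Measurable[ℱ n] (fun ω => ∑ t ∈ Finset.Icc 1 N, X t ω) := by
    intro n N hNn
    apply Finset.measurable_sum
    intro t ht
    obtain ⟨h1t, h2t⟩ := Finset.mem_Icc.mp ht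
    exact ((hadapted t).mono (ℱ.mono (by omega)) le_rfl)
  have hMadp : StronglyAdapted ℱ M := by
    intro n
    apply Measurable.stronglyMeasurable
    exact (Real.measurable_exp.comp (((hpsum_meas n n le_rfl).div_const 2).sub (hXsum_meas n n le_rfl)))
  -- integrability of M
  have hMbd : ∀ n : ℕ, ∀ᵐ ω ∂μ, ‖M n ω‖ ≤ Real.exp (n / 2) := by
    intro n
    filter_upwards [hpae n] with ω hω
    have hps : ∑ t ∈ Finset.Icc 1 n, p t ω ≤ n := by
      calc ∑ t ∈ Finset.Icc 1 n, p t ω ≤ ∑ t ∈ Finset.Icc 1 n, (1 : ℝ) :=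
            Finset.sum_le_sum fun t ht => (hω t ht).2
        _ = (n : ℝ) := by simp [Nat.card_Icc]
    have hxs : (0 : ℝ) ≤ ∑ t ∈ Finset.Icc 1 n, X t ω :=
      Finset.sum_nonneg fun t _ => (hX01 t ω).1
    rw [hM]
    simp only [Real.norm_eq_abs, abs_of_pos (Real.exp_pos _)]
    apply Real.exp_le_exp.mpr
    linarith
  have hMint : ∀ n, Integrable (M n) μ := fun n =>
    ⟨((hMadp n).mono (ℱ.le n)).aestronglyMeasurable,
      HasFiniteIntegral.of_bounded (hMbd n)⟩
  -- the key real inequality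
  have hkey : ∀ q : ℝ, 0 ≤ q → Real.exp (q / 2) * (1 - c * q) ≤ 1 := by
    intro q hq
    have hcge : (1 : ℝ) / 2 ≤ c := by
      have h2 : (2 : ℝ) ≤ Real.exp 1 := by have := Real.add_one_le_exp 1; linarith
      have : Real.exp (-1) ≤ 1 / 2 := by
        rw [Real.exp_neg]
        rw [inv_le_comm₀ (Real.exp_pos 1) (by norm_num)]
        linarith
      rw [hc]; linarith
    have h1 : 1 - c * q ≤ Real.exp (-(c * q)) := by
      have := Real.add_one_le_exp (-(c * q)); linarith
    calc Real.exp (q / 2) * (1 - c * q) ≤ Real.exp (q / 2) * Real.exp (-(c * q)) :=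
          mul_le_mul_of_nonneg_left h1 (Real.exp_pos _).le
      _ = Real.exp (q / 2 - c * q) := by rw [← Real.exp_add]; ring_nf
      _ ≤ Real.exp 0 := Real.exp_le_exp.mpr (by nlinarith)
      _ = 1 := Real.exp_zero
  -- supermartingale step
  have hstep : ∀ n, μ[M (n + 1) | ℱ n] ≤ᵐ[μ] M n := by
    intro n
    set G : Ω → ℝ := fun ω => Real.exp
      ((∑ t ∈ Finset.Icc 1 n, p t ω) / 2 + p (n + 1) ω / 2 - ∑ t ∈ Finset.Icc 1 n, X t ω)
      with hG
    have hpn1 : StronglyMeasurable[ℱ n] (p (n + 1)) := hpred (n + 1) (by omega)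
    have hGsm : StronglyMeasurable[ℱ n] G := by
      apply Measurable.stronglyMeasurable
      exact Real.measurable_exp.comp ((((hpsum_meas n n le_rfl).div_const 2).add
        (hpn1.measurable.div_const 2)).sub (hXsum_meas n n le_rfl))
    have hGbd : ∀ᵐ ω ∂μ, ‖G ω‖ ≤ Real.exp ((n + 1) / 2) := by
      filter_upwards [hpae (n + 1)] with ω hω
      have hps : ∑ t ∈ Finset.Icc 1 n, p t ω ≤ n := by
        calc ∑ t ∈ Finset.Icc 1 n, p t ω ≤ ∑ t ∈ Finset.Icc 1 n, (1 : ℝ) :=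
              Finset.sum_le_sum fun t ht => by
                obtain ⟨h1, h2⟩ := Finset.mem_Icc.mp ht
                exact (hω t (Finset.mem_Icc.mpr ⟨h1, by omega⟩)).2
          _ = (n : ℝ) := by simp [Nat.card_Icc]
      have hpn : p (n + 1) ω ≤ 1 :=
        (hω (n + 1) (Finset.mem_Icc.mpr ⟨by omega, le_rfl⟩)).2
      have hxs : (0 : ℝ) ≤ ∑ t ∈ Finset.Icc 1 n, X t ω :=
        Finset.sum_nonneg fun t _ => (hX01 t ω).1
      rw [hG]
      simp only [Real.norm_eq_abs, abs_of_pos (Real.exp_pos _)]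
      apply Real.exp_le_exp.mpr
      push_cast
      linarith
    have hGint : Integrable G μ :=
      ⟨(hGsm.mono (ℱ.le n)).aestronglyMeasurable, HasFiniteIntegral.of_bounded hGbd⟩
    have hGXint : Integrable (G * X (n + 1)) μ := by
      refine ⟨((hGsm.mono (ℱ.le n)).mul ((hadapted (n + 1)).mono
        (ℱ.le (n + 1)) le_rfl).stronglyMeasurable).aestronglyMeasurable,
        HasFiniteIntegral.of_bounded (C := Real.exp ((n + 1) / 2)) ?_⟩
      filter_upwards [hGbd] with ω hω
      rcases h01 (n + 1) ω with h | h <;>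
        simp only [Pi.mul_apply, h, mul_zero, mul_one, norm_zero] <;>
        [positivity; exact hω]
    have hsplit : M (n + 1) = fun ω => G ω - c * (G * X (n + 1)) ω := by
      funext ω
      simp only [hM, hG, hc, Pi.mul_apply, Finset.sum_Icc_succ_top (Nat.le_add_left 1 n)]
      exact aux_split _ _ _ _ (h01 (n + 1) ω)
    have e1 : μ[M (n + 1) | ℱ n] =ᵐ[μ] fun ω => G ω - c * (G ω * p (n + 1) ω) := by
      rw [hsplit]
      have hsub : μ[(fun ω => G ω - c * (G * X (n + 1)) ω) | ℱ n] =ᵐ[μ]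
          μ[G | ℱ n] - μ[(fun ω => c * (G * X (n + 1)) ω) | ℱ n] :=
        condExp_sub hGint (hGXint.const_mul c) _
      have hsmul : μ[(fun ω => c * (G * X (n + 1)) ω) | ℱ n] =ᵐ[μ]
          fun ω => c * (μ[(G * X (n + 1)) | ℱ n]) ω := by
        have := condExp_smul (μ := μ) (m := ℱ n) c (G * X (n + 1))
        exact this
      have hGeq : μ[G | ℱ n] = G := condExp_of_stronglyMeasurable (ℱ.le n) hGsm hGint
      have hmul : μ[(G * X (n + 1)) | ℱ n] =ᵐ[μ] G * μ[X (n + 1) | ℱ n] :=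
        condExp_mul_of_stronglyMeasurable_left hGsm hGXint (hXint (n + 1))
      have hcnd : μ[X (n + 1) | ℱ n] =ᵐ[μ] p (n + 1) := hcond (n + 1) (by omega)
      filter_upwards [hsub, hsmul, hmul, hcnd] with ω h1ω h2ω h3ω h4ω
      simp only [Pi.sub_apply, Pi.mul_apply] at *
      rw [h1ω, hGeq, h2ω, h3ω, h4ω]
    have e2 : ∀ᵐ ω ∂μ, G ω - c * (G ω * p (n + 1) ω) ≤ M n ω := by
      filter_upwards [hp01 (n + 1) (by omega)] with ω hω
      have hexp : G ω = M n ω * Real.exp (p (n + 1) ω / 2) := by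
        simp only [hG, hM]
        exact aux_factor _ _ _
      have hMpos : 0 ≤ M n ω := (Real.exp_pos _).le
      have := hkey (p (n + 1) ω) hω.1
      calc G ω - c * (G ω * p (n + 1) ω)
          = M n ω * (Real.exp (p (n + 1) ω / 2) * (1 - c * p (n + 1) ω)) := by
            rw [hexp]; ring
        _ ≤ M n ω * 1 := mul_le_mul_of_nonneg_left this hMpos
        _ = M n ω := mul_one _
    filter_upwards [e1, e2] with ω h1ω h2ω
    rw [h1ω]
    exact h2ω
  have hMsuper : Supermartingale M ℱ μ := supermartingale_nat hMadp hMint hstep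
  have hMnonneg : ∀ n ω, 0 ≤ M n ω := fun n ω => (Real.exp_pos _).le
  -- apply Ville
  set ε : ℝ≥0 := Real.toNNReal (Real.exp W) with hε
  have hεr : (ε : ℝ) = Real.exp W := Real.coe_toNNReal _ (Real.exp_pos _).le
  have hsubset : {ω | ∃ n : ℕ, 1 ≤ n ∧
      ∑ t ∈ Finset.Icc 1 n, X t ω < (∑ t ∈ Finset.Icc 1 n, p t ω) / 2 - W} ⊆
      {ω | ∃ k, (ε : ℝ) ≤ M k ω} := by
    rintro ω ⟨n, -, hn⟩
    refine ⟨n, ?_⟩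
    rw [hεr, hM]
    apply Real.exp_le_exp.mpr
    linarith
  have hville := ville hMsuper hMnonneg ε
  have hM0 : ∫ ω, M 0 ω ∂μ = 1 := by
    have : M 0 = fun _ => (1 : ℝ) := by funext ω; simp [hM]
    rw [this]
    simp
  rw [hM0, ENNReal.ofReal_one] at hville
  have hmono2 : μ {ω | ∃ n : ℕ, 1 ≤ n ∧
      ∑ t ∈ Finset.Icc 1 n, X t ω < (∑ t ∈ Finset.Icc 1 n, p t ω) / 2 - W} ≤
      μ {ω | ∃ k, (ε : ℝ) ≤ M k ω} := measure_mono hsubset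
  have hfin : (ε : ℝ≥0∞) * μ {ω | ∃ k, (ε : ℝ) ≤ M k ω} ≤ 1 := by
    rw [← smul_eq_mul, ← ENNReal.smul_def]; exact hville
  have hprod : ENNReal.ofReal (Real.exp (-W)) * (ε : ℝ≥0∞) = 1 := by
    have : (ε : ℝ≥0∞) = ENNReal.ofReal (Real.exp W) := rfl
    rw [this, ← ENNReal.ofReal_mul (Real.exp_pos _).le, ← Real.exp_add]
    norm_num
  calc μ {ω | ∃ n : ℕ, 1 ≤ n ∧
        ∑ t ∈ Finset.Icc 1 n, X t ω < (∑ t ∈ Finset.Icc 1 n, p t ω) / 2 - W}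
      ≤ μ {ω | ∃ k, (ε : ℝ) ≤ M k ω} := hmono2
    _ = 1 * μ {ω | ∃ k, (ε : ℝ) ≤ M k ω} := (one_mul _).symm
    _ = ENNReal.ofReal (Real.exp (-W)) * ((ε : ℝ≥0∞) * μ {ω | ∃ k, (ε : ℝ) ≤ M k ω}) := by
        rw [← mul_assoc, hprod]
    _ ≤ ENNReal.ofReal (Real.exp (-W)) * 1 := by
        exact mul_le_mul_right hfin _
    _ = ENNReal.ofReal (Real.exp (-W)) := mul_one _
end

section
/- Let $\{\mathcal{F}_i\}$ be a filtration, $X_1, \ldots, X_n$ Bernoulli random variables with $\mathbb{P}(X_i = 1 \mid \mathcal{F}_{i-1}) = P_i$ ($P_i$ being $\mathcal{F}_{i-1}$-measurable). Then the process $M_n = \exp\left(\sum_{t=1}^n (-X_t + P_t/2)\right)$ is a supermartingale with respect to $\{\mathcal{F}_n\}$. -/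
open MeasureTheory

theorem stmt_9 {Ω : Type*} {m0 : MeasurableSpace Ω} (μ : Measure Ω)
    [IsProbabilityMeasure μ] (ℱ : Filtration ℕ m0)
    (X : ℕ → Ω → ℝ) (p : ℕ → Ω → ℝ)
    (h01 : ∀ i ω, X i ω = 0 ∨ X i ω = 1)
    (hadapted : Adapted ℱ X)
    (hpred : ∀ i : ℕ, 1 ≤ i → StronglyMeasurable[ℱ (i - 1)] (p i))
    (hcond : ∀ i : ℕ, 1 ≤ i → μ[X i | ℱ (i - 1)] =ᵐ[μ] p i) :
    Supermartingale
      (fun n ω => Real.exp (∑ t ∈ Finset.Icc 1 n, (-(X t ω) + p t ω / 2)))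
      ℱ μ := by
  set c : ℝ := 1 - Real.exp (-1) with hc
  have hX0 : ∀ i ω, 0 ≤ X i ω := fun i ω => by rcases h01 i ω with h | h <;> simp [h]
  have hX1 : ∀ i ω, X i ω ≤ 1 := fun i ω => by rcases h01 i ω with h | h <;> simp [h]
  have hXint : ∀ i, Integrable (X i) μ := by
    intro i
    refine (integrable_const (1 : ℝ)).mono'
      ((hadapted i).mono (ℱ.le i) le_rfl).aestronglyMeasurable ?_
    filter_upwards with ω
    rw [Real.norm_eq_abs, abs_of_nonneg (hX0 i ω)]
    exact hX1 i ω
  -- a.e. bounds for p i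
  have hp0 : ∀ i : ℕ, 1 ≤ i → ∀ᵐ ω ∂μ, 0 ≤ p i ω := by
    intro i hi
    filter_upwards [hcond i hi,
      condExp_nonneg (m := ℱ (i - 1)) (Filter.Eventually.of_forall (hX0 i))] with ω h1 h2
    rw [← h1]; exact h2
  have hp1 : ∀ i : ℕ, 1 ≤ i → ∀ᵐ ω ∂μ, p i ω ≤ 1 := by
    intro i hi
    have hmono : μ[X i | ℱ (i - 1)] ≤ᵐ[μ] μ[(fun _ => (1 : ℝ)) | ℱ (i - 1)] :=
      condExp_mono (hXint i) (integrable_const 1) (Filter.Eventually.of_forall (hX1 i))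
    rw [condExp_const (ℱ.le (i - 1)) (1 : ℝ) (μ := μ)] at hmono
    filter_upwards [hcond i hi, hmono] with ω h1 h2
    rw [← h1]; exact h2
  -- the sum is strongly measurable wrt ℱ n
  have hSmeas : ∀ n : ℕ, StronglyMeasurable[ℱ n]
      (fun ω => ∑ t ∈ Finset.Icc 1 n, (-(X t ω) + p t ω / 2)) := by
    intro n
    apply Finset.stronglyMeasurable_fun_sum
    intro t ht
    rw [Finset.mem_Icc] at ht
    have h1 : StronglyMeasurable[ℱ n] (X t) := ((hadapted t).mono (ℱ.mono ht.2) le_rfl).stronglyMeasurable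
    have h2 : StronglyMeasurable[ℱ n] (p t) :=
      (hpred t ht.1).mono (ℱ.mono (le_trans (Nat.sub_le t 1) ht.2))
    simp only [div_eq_mul_inv]
    exact h1.neg.add (h2.mul stronglyMeasurable_const)
  have hMmeas : ∀ n : ℕ, StronglyMeasurable[ℱ n]
      (fun ω => Real.exp (∑ t ∈ Finset.Icc 1 n, (-(X t ω) + p t ω / 2))) :=
    fun n => Real.continuous_exp.comp_stronglyMeasurable (hSmeas n)
  -- integrability
  have hMint : ∀ n : ℕ, Integrable
      (fun ω => Real.exp (∑ t ∈ Finset.Icc 1 n, (-(X t ω) + p t ω / 2))) μ := by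
    intro n
    refine (integrable_const (Real.exp (n / 2 : ℝ))).mono'
      ((hMmeas n).mono (ℱ.le n)).aestronglyMeasurable ?_
    have hball : ∀ᵐ ω ∂μ, ∀ t ∈ Finset.Icc 1 n, p t ω ≤ 1 := by
      rw [eventually_countable_forall]
      intro t
      by_cases ht : t ∈ Finset.Icc 1 n
      · rw [Finset.mem_Icc] at ht
        filter_upwards [hp1 t ht.1] with ω h _; exact h
      · filter_upwards with ω h; exact absurd h ht
    filter_upwards [hball] with ω hω
    rw [Real.norm_eq_abs, abs_of_pos (Real.exp_pos _), Real.exp_le_exp]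
    calc ∑ t ∈ Finset.Icc 1 n, (-(X t ω) + p t ω / 2)
        ≤ ∑ t ∈ Finset.Icc 1 n, (1 / 2 : ℝ) := by
          apply Finset.sum_le_sum
          intro t ht
          have := hω t ht
          have h0 := hX0 t ω
          linarith
      _ ≤ n / 2 := by
          rw [Finset.sum_const, Nat.card_Icc]
          simp only [nsmul_eq_mul]
          have : ((n + 1 - 1 : ℕ) : ℝ) ≤ (n : ℝ) := by
            simp
          nlinarith [this]
  refine supermartingale_nat hMmeas hMint ?_
  intro i
  set M : ℕ → Ω → ℝ :=
    fun n ω => Real.exp (∑ t ∈ Finset.Icc 1 n, (-(X t ω) + p t ω / 2)) with hM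
  -- split off the last term
  have hsplit : M (i + 1) = (fun ω => M i ω * Real.exp (p (i + 1) ω / 2)) *
      (fun ω => Real.exp (-(X (i + 1) ω))) := by
    funext ω
    simp only [hM, Pi.mul_apply]
    rw [Finset.sum_Icc_succ_top (Nat.le_add_left 1 i), Real.exp_add, Real.exp_add]
    ring
  have hGmeas : StronglyMeasurable[ℱ i] (fun ω => M i ω * Real.exp (p (i + 1) ω / 2)) := by
    have hp' : StronglyMeasurable[ℱ i] (p (i + 1)) := by
      have := hpred (i + 1) (Nat.le_add_left 1 i)
      simpa using this
    exact (hMmeas i).mul (Real.continuous_exp.comp_stronglyMeasurable (by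
        simpa only [div_eq_mul_inv] using hp'.mul_const ((2:ℝ)⁻¹)))
  have hhint : Integrable (fun ω => Real.exp (-(X (i + 1) ω))) μ := by
    refine (integrable_const (1 : ℝ)).mono'
      (Real.continuous_exp.comp_stronglyMeasurable
        (((hadapted (i+1)).mono (ℱ.le (i+1)) le_rfl).stronglyMeasurable.neg)).aestronglyMeasurable ?_
    filter_upwards with ω
    rw [Real.norm_eq_abs, abs_of_pos (Real.exp_pos _)]
    rw [Real.exp_le_one_iff]
    simpa using hX0 (i+1) ω
  have hGhint : Integrable ((fun ω => M i ω * Real.exp (p (i + 1) ω / 2)) *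
      (fun ω => Real.exp (-(X (i + 1) ω)))) μ := by
    rw [← hsplit]; exact hMint (i + 1)
  have hpull := condExp_mul_of_stronglyMeasurable_left (m := ℱ i) (μ := μ) hGmeas hGhint hhint
  -- compute μ[exp(-X)|ℱ i]
  have hexp_eq : (fun ω => Real.exp (-(X (i + 1) ω))) =
      (fun _ => (1 : ℝ)) - c • X (i + 1) := by
    funext ω
    simp only [Pi.sub_apply, Pi.smul_apply, smul_eq_mul, hc]
    rcases h01 (i+1) ω with h | h <;> simp [h]
  have hcond' : μ[X (i + 1) | ℱ i] =ᵐ[μ] p (i + 1) := by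
    have := hcond (i + 1) (Nat.le_add_left 1 i)
    simpa using this
  have hcexp : μ[(fun ω => Real.exp (-(X (i + 1) ω))) | ℱ i] =ᵐ[μ]
      fun ω => 1 - c * p (i + 1) ω := by
    rw [hexp_eq]
    have h1 := condExp_sub (m := ℱ i) (μ := μ) (integrable_const (1 : ℝ))
      ((hXint (i + 1)).smul c)
    refine h1.trans ?_
    have h2 := condExp_smul (m := ℱ i) (μ := μ) c (X (i + 1))
    have h3 := condExp_const (ℱ.le i) (1 : ℝ) (μ := μ)
    filter_upwards [h2, hcond'] with ω hω2 hω4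
    simp only [Pi.sub_apply, h3]
    rw [hω2]
    simp [hω4]
  -- combine
  show μ[M (i + 1) | ℱ i] ≤ᵐ[μ] M i
  rw [hsplit]
  refine hpull.le.trans ?_
  have hcle : (1 : ℝ) / 2 ≤ c := by
    have h2 : (2 : ℝ) ≤ Real.exp 1 := by
      have := Real.add_one_le_exp (1 : ℝ)
      linarith
    have : Real.exp (-1) ≤ 1 / 2 := by
      rw [Real.exp_neg]
      rw [inv_le_comm₀ (Real.exp_pos 1) (by norm_num)]
      linarith
    simp only [hc]
    linarith
  filter_upwards [hcexp, hp0 (i + 1) (Nat.le_add_left 1 i), hp1 (i + 1) (Nat.le_add_left 1 i)]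
    with ω hω hq0 hq1
  simp only [Pi.mul_apply]
  rw [hω]
  set q := p (i + 1) ω
  have key : Real.exp (q / 2) * (1 - c * q) ≤ 1 := by
    have h1 : 1 - c * q ≤ Real.exp (-(c * q)) := by
      have := Real.add_one_le_exp (-(c * q)); linarith
    calc Real.exp (q / 2) * (1 - c * q) ≤ Real.exp (q / 2) * Real.exp (-(c * q)) :=
          mul_le_mul_of_nonneg_left h1 (Real.exp_pos _).le
      _ = Real.exp (q / 2 - c * q) := by rw [← Real.exp_add]; ring_nf
      _ ≤ 1 := by
          rw [Real.exp_le_one_iff]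
          nlinarith
  calc M i ω * Real.exp (q / 2) * (1 - c * q)
      = M i ω * (Real.exp (q / 2) * (1 - c * q)) := by ring
    _ ≤ M i ω * 1 := mul_le_mul_of_nonneg_left key (Real.exp_pos _).le
    _ = M i ω := mul_one _
end

section
/- Suppose a sequence of per-episode optimality gaps $\Delta_k \in [0, H]$ satisfies: for every $\epsilon \in (0, H]$, the number of episodes $k$ with $\Delta_k > \epsilon$ is at most $g(\epsilon) = \frac{C_1}{\epsilon}\left(\ln\frac{C_3}{\epsilon}\right)^k + \frac{C_2}{\epsilon^2}\left(\ln\frac{C_3}{\epsilon}\right)^{2k}$ for constants $C_1 \geq C_2 \geq 2$, $C_3 \geq \max\{H, e\}$, and fixed integer $k \geq 0$. Then the cumulative regret $R(T) = \sum_{j=1}^T \Delta_j$ satisfies $R(T) \leq T\epsilon_{\min} + \int_{\epsilon_{\min}}^H g(\epsilon)\,d\epsilon$ for any $\epsilon_{\min} \in (0, H]$ with $g(\epsilon_{\min}) \leq T$, and consequently $R(T) = O\left(\left(\sqrt{C_2 T} + C_1\right)\operatorname{polylog}(T, C_3, C_1, H)\right)$ for all $T$. -/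
/-- The mistake bound `g ε = (C₁/ε) (ln (C₃/ε))^p + (C₂/ε²) (ln (C₃/ε))^{2p}`. -/
noncomputable def mistakeBound (C1 C2 C3 : ℝ) (p : ℕ) (ε : ℝ) : ℝ :=
  C1 / ε * (Real.log (C3 / ε)) ^ p + C2 / ε ^ 2 * (Real.log (C3 / ε)) ^ (2 * p)

open Real MeasureTheory intervalIntegral Set

lemma polydom (a b : ℝ) (ha : 1 ≤ a) (m : ℕ) :
    ∃ C : ℝ, 0 ≤ C ∧ ∀ t : ℝ, 0 ≤ t →
      3 * (t + a) ^ m ≤ (t + b) ^ (2 * (m + 1)) + C := by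
  set t₀ : ℝ := |2 * b - 3| + 3 * a + 1 with ht₀
  have habs : 0 ≤ |2 * b - 3| := abs_nonneg _
  have ht₀1 : 1 ≤ t₀ := by nlinarith
  refine ⟨3 * (t₀ + a) ^ m, by positivity, fun t ht => ?_⟩
  have hta : 1 ≤ t + a := by linarith
  rcases le_or_gt t t₀ with h | h
  · have h1 : (t + a) ^ m ≤ (t₀ + a) ^ m :=
      pow_le_pow_left₀ (by linarith) (by linarith) m
    have h2 : 0 ≤ (t + b) ^ (2 * (m + 1)) := by
      rw [pow_mul]; positivity
    linarith
  · have ht1 : 1 ≤ t := le_trans ht₀1 h.le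
    have key : 3 * (t + a) ≤ (t + b) ^ 2 := by
      nlinarith [le_abs_self (2 * b - 3), neg_abs_le (2 * b - 3), sq_nonneg b]
    have h1 : 3 * (t + a) ^ m ≤ (3 * (t + a)) ^ (m + 1) := by
      have h3 : (3:ℝ) ^ 1 ≤ (3:ℝ) ^ (m + 1) :=
        pow_le_pow_right₀ (by norm_num) (Nat.le_add_left 1 m)
      have h4 : (t + a) ^ m ≤ (t + a) ^ (m + 1) :=
        pow_le_pow_right₀ hta (Nat.le_succ m)
      calc 3 * (t + a) ^ m ≤ 3 ^ (m + 1) * (t + a) ^ (m + 1) := by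
            apply mul_le_mul (by simpa using h3) h4 (by positivity) (by positivity)
        _ = (3 * (t + a)) ^ (m + 1) := (mul_pow _ _ _).symm
    have h2 : (3 * (t + a)) ^ (m + 1) ≤ ((t + b) ^ 2) ^ (m + 1) :=
      pow_le_pow_left₀ (by positivity) key _
    have h5 : 0 ≤ (3 : ℝ) * (t₀ + a) ^ m := by positivity
    calc 3 * (t + a) ^ m ≤ ((t + b) ^ 2) ^ (m + 1) := h1.trans h2
      _ = (t + b) ^ (2 * (m + 1)) := by rw [← pow_mul]
      _ ≤ _ := by linarith


lemma mb_contOn (C1 C2 C3 : ℝ) (p : ℕ) (hC3 : 0 < C3) {a b : ℝ} (ha : 0 < a) :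
    ContinuousOn (mistakeBound C1 C2 C3 p) (Set.Icc a b) := by
  have hne : ∀ x ∈ Set.Icc a b, x ≠ 0 := fun x hx => ne_of_gt (lt_of_lt_of_le ha hx.1)
  have hlog : ContinuousOn (fun x => Real.log (C3 / x)) (Set.Icc a b) :=
    (continuousOn_const.div continuousOn_id hne).log
      (fun x hx => div_ne_zero (ne_of_gt hC3) (hne x hx))
  exact ((continuousOn_const.div continuousOn_id hne).mul (hlog.pow p)).add
    ((continuousOn_const.div (continuousOn_id.pow 2)
      (fun x hx => pow_ne_zero 2 (hne x hx))).mul (hlog.pow (2 * p)))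

lemma ind_intble (c a b : ℝ) :
    IntervalIntegrable (Set.indicator (Set.Iio c) (fun _ => (1:ℝ))) volume a b := by
  rw [intervalIntegrable_iff]
  exact (integrableOn_const measure_Ioc_lt_top.ne).indicator measurableSet_Iio

lemma ind_integral {c a b : ℝ} (hc : c ∈ Set.Icc a b) :
    ∫ ε in a..b, Set.indicator (Set.Iio c) (fun _ => (1:ℝ)) ε = c - a := by
  have hae : ∀ᵐ x : ℝ, x ∈ Set.uIoc a b →
      Set.indicator (Set.Iio c) (fun _ => (1:ℝ)) x
        = Set.indicator {y : ℝ | y ≤ c} (fun _ => (1:ℝ)) x := by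
    have h0 : ∀ᵐ x : ℝ, x ∉ ({c} : Set ℝ) :=
      measure_eq_zero_iff_ae_notMem.mp (measure_singleton c)
    filter_upwards [h0] with x hx _
    simp only [Set.indicator_apply, Set.mem_Iio, Set.mem_setOf_eq]
    have : (x < c) ↔ (x ≤ c) :=
      ⟨le_of_lt, fun h => lt_of_le_of_ne h (by simpa using hx)⟩
    rw [if_congr this rfl rfl]
  rw [integral_congr_ae hae, integral_indicator hc, integral_one]

set_option maxHeartbeats 1000000 in
lemma regret_int (H C1 C2 C3 : ℝ) (p : ℕ) (hH : 0 < H) (hC3 : 0 < C3)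
    (Δ : ℕ → ℝ) (hΔ : ∀ j, Δ j ∈ Set.Icc 0 H)
    (hmistake : ∀ ε ∈ Set.Ioc (0:ℝ) H, ∀ T : ℕ,
      (((Finset.Icc 1 T).filter (fun j => Δ j > ε)).card : ℝ)
        ≤ mistakeBound C1 C2 C3 p ε)
    (T : ℕ) (εmin : ℝ) (hε : εmin ∈ Set.Ioc 0 H) :
    ∑ j ∈ Finset.Icc 1 T, Δ j
      ≤ T * εmin + ∫ ε in εmin..H, mistakeBound C1 C2 C3 p ε := by
  obtain ⟨hε0, hεH⟩ := hε
  set F : ℝ → ℝ := fun ε => ∑ j ∈ Finset.Icc 1 T,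
      Set.indicator (Set.Iio (Δ j)) (fun _ => (1:ℝ)) ε with hF
  have hFint : IntervalIntegrable F volume εmin H := by
    have h := IntervalIntegrable.sum (μ := volume) (a := εmin) (b := H)
      (Finset.Icc 1 T)
      (f := fun j => Set.indicator (Set.Iio (Δ j)) (fun _ => (1:ℝ)))
      (fun j _ => ind_intble _ _ _)
    have hfun : F = ∑ i ∈ Finset.Icc 1 T,
        (fun j => Set.indicator (Set.Iio (Δ j)) (fun _ => (1:ℝ))) i := by
      funext ε; simp [hF, Finset.sum_apply]
    rw [hfun]; exact h
  have hgint : IntervalIntegrable (mistakeBound C1 C2 C3 p) volume εmin H :=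
    (mb_contOn C1 C2 C3 p hC3 hε0).intervalIntegrable_of_Icc hεH
  have hFle : ∀ ε ∈ Set.Icc εmin H, F ε ≤ mistakeBound C1 C2 C3 p ε := by
    intro ε hε'
    refine le_trans (le_of_eq ?_) (hmistake ε ⟨lt_of_lt_of_le hε0 hε'.1, hε'.2⟩ T)
    rw [hF]
    simp only [Set.indicator_apply, Set.mem_Iio, gt_iff_lt]
    rw [Finset.sum_boole]
  have hmono : ∫ ε in εmin..H, F ε ≤ ∫ ε in εmin..H, mistakeBound C1 C2 C3 p ε :=
    integral_mono_on hεH hFint hgint hFle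
  have hsum : ∫ ε in εmin..H, F ε
      = ∑ j ∈ Finset.Icc 1 T,
          ∫ ε in εmin..H, Set.indicator (Set.Iio (Δ j)) (fun _ => (1:ℝ)) ε :=
    by simp only [hF]; exact intervalIntegral.integral_finset_sum (fun j _ => ind_intble _ _ _)
  have hjle : ∀ j ∈ Finset.Icc 1 T, Δ j - εmin
      ≤ ∫ ε in εmin..H, Set.indicator (Set.Iio (Δ j)) (fun _ => (1:ℝ)) ε := by
    intro j _
    rcases le_or_gt εmin (Δ j) with h | h
    · rw [ind_integral ⟨h, (hΔ j).2⟩]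
    · have hnn : 0 ≤ ∫ ε in εmin..H, Set.indicator (Set.Iio (Δ j)) (fun _ => (1:ℝ)) ε :=
        integral_nonneg hεH (fun u _ => Set.indicator_nonneg (fun _ _ => zero_le_one) u)
      linarith
  have hcard : ((Finset.Icc 1 T).card : ℝ) = T := by simp [Nat.card_Icc]
  have h1 : ∑ j ∈ Finset.Icc 1 T, (Δ j - εmin)
      ≤ ∫ ε in εmin..H, F ε := by
    rw [hsum]; exact Finset.sum_le_sum hjle
  have h2 : ∑ j ∈ Finset.Icc 1 T, (Δ j - εmin)
      = (∑ j ∈ Finset.Icc 1 T, Δ j) - T * εmin := by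
    rw [Finset.sum_sub_distrib, Finset.sum_const, nsmul_eq_mul, hcard]
  linarith

lemma int_mb_le (H C1 C2 C3 : ℝ) (p : ℕ) (hC1 : 0 ≤ C1) (hC2 : 0 ≤ C2)
    (hH : 0 < H) (hHC3 : H ≤ C3) (εmin : ℝ) (hε : εmin ∈ Set.Ioc 0 H) :
    ∫ ε in εmin..H, mistakeBound C1 C2 C3 p ε
      ≤ C1 * (Real.log (C3 / εmin)) ^ p * Real.log (H / εmin)
        + C2 * (Real.log (C3 / εmin)) ^ (2 * p) / εmin := by
  obtain ⟨hε0, hεH⟩ := hε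
  have hC3 : 0 < C3 := lt_of_lt_of_le hH hHC3
  set M : ℝ := Real.log (C3 / εmin) with hM
  have hne : ∀ x ∈ Set.Icc εmin H, x ≠ 0 := fun x hx => ne_of_gt (lt_of_lt_of_le hε0 hx.1)
  have hM0 : 0 ≤ M := Real.log_nonneg ((one_le_div hε0).2 (hεH.trans hHC3))
  have h0uIcc : (0:ℝ) ∉ Set.uIcc εmin H := Set.notMem_uIcc_of_lt hε0 hH
  have hint1 : IntervalIntegrable (fun ε : ℝ => C1 * M ^ p * ε⁻¹) volume εmin H :=
    (continuousOn_const.mul (continuousOn_id.inv₀ hne)).intervalIntegrable_of_Icc hεH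
  have hint2 : IntervalIntegrable (fun ε : ℝ => C2 * M ^ (2 * p) * ε ^ (-2 : ℤ)) volume εmin H := by
    refine (continuousOn_const.mul ?_).intervalIntegrable_of_Icc hεH
    exact ContinuousOn.zpow₀ continuousOn_id (-2) (fun x hx => Or.inl (hne x hx))
  have hmono : ∫ ε in εmin..H, mistakeBound C1 C2 C3 p ε
      ≤ ∫ ε in εmin..H, (C1 * M ^ p * ε⁻¹ + C2 * M ^ (2 * p) * ε ^ (-2 : ℤ)) := by
    refine integral_mono_on hεH
      ((mb_contOn C1 C2 C3 p hC3 hε0).intervalIntegrable_of_Icc hεH)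
      (hint1.add hint2) ?_
    intro ε hε'
    have hεpos : 0 < ε := lt_of_lt_of_le hε0 hε'.1
    have hL0 : 0 ≤ Real.log (C3 / ε) :=
      Real.log_nonneg ((one_le_div hεpos).2 (hε'.2.trans hHC3))
    have hLM : Real.log (C3 / ε) ≤ M := by
      rw [hM]
      apply Real.log_le_log (by positivity)
      gcongr
      exact hε'.1
    have h1 : (Real.log (C3 / ε)) ^ p ≤ M ^ p := pow_le_pow_left₀ hL0 hLM p
    have h2 : (Real.log (C3 / ε)) ^ (2 * p) ≤ M ^ (2 * p) := pow_le_pow_left₀ hL0 hLM _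
    have hz : (ε : ℝ) ^ (-2 : ℤ) = (ε ^ 2)⁻¹ := by
      rw [zpow_neg, zpow_two, sq]
    rw [mistakeBound, hz]
    have e1 : C1 / ε * Real.log (C3 / ε) ^ p ≤ C1 * M ^ p * ε⁻¹ := by
      rw [div_mul_eq_mul_div, mul_comm (C1 * M ^ p), ← div_eq_inv_mul]
      gcongr
    have e2 : C2 / ε ^ 2 * Real.log (C3 / ε) ^ (2 * p)
        ≤ C2 * M ^ (2 * p) * (ε ^ 2)⁻¹ := by
      rw [div_mul_eq_mul_div, mul_comm (C2 * M ^ (2 * p)), ← div_eq_inv_mul]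
      gcongr
    linarith
  have hcalc : ∫ ε in εmin..H, (C1 * M ^ p * ε⁻¹ + C2 * M ^ (2 * p) * ε ^ (-2 : ℤ))
      = C1 * M ^ p * Real.log (H / εmin)
        + C2 * M ^ (2 * p) * (εmin⁻¹ - H⁻¹) := by
    rw [intervalIntegral.integral_add hint1 hint2,
      intervalIntegral.integral_const_mul, intervalIntegral.integral_const_mul,
      integral_inv h0uIcc, integral_zpow (Or.inr ⟨by norm_num, h0uIcc⟩)]
    have he : ((-2 : ℤ) + 1 : ℤ) = -1 := by norm_num
    rw [he]
    push_cast
    rw [zpow_neg_one, zpow_neg_one]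
    ring
  rw [hcalc] at hmono
  have hfin : C2 * M ^ (2 * p) * (εmin⁻¹ - H⁻¹) ≤ C2 * M ^ (2 * p) / εmin := by
    rw [div_eq_mul_inv]
    have h3 : 0 ≤ C2 * M ^ (2 * p) := by positivity
    have h4 : 0 ≤ H⁻¹ := by positivity
    nlinarith
  linarith

lemma main2 (H C1 C2 C3 : ℝ) (p : ℕ) (hH : 0 < H)
    (hC12 : C2 ≤ C1) (hC2 : 2 ≤ C2) (hC3 : max H (Real.exp 1) ≤ C3)
    (Δ : ℕ → ℝ) (hΔ : ∀ j, Δ j ∈ Set.Icc 0 H)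
    (hmistake : ∀ ε ∈ Set.Ioc (0:ℝ) H, ∀ T : ℕ,
      (((Finset.Icc 1 T).filter (fun j => Δ j > ε)).card : ℝ)
        ≤ mistakeBound C1 C2 C3 p ε)
    (T : ℕ) (hT : 1 ≤ T) :
    ∑ j ∈ Finset.Icc 1 T, Δ j
      ≤ (Real.sqrt (C2 * T) + C1)
          * (3 * (Real.log T + (1 + Real.log C3)) ^ (2 * p + 1)) := by
  have hHC3 : H ≤ C3 := le_trans (le_max_left _ _) hC3
  have hC3pos : 0 < C3 := lt_of_lt_of_le hH hHC3
  have hC2pos : (0:ℝ) < C2 := lt_of_lt_of_le (by norm_num) hC2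
  have hC1pos : (0:ℝ) < C1 := lt_of_lt_of_le hC2pos hC12
  have hlogC3 : 1 ≤ Real.log C3 := by
    have := Real.log_le_log (Real.exp_pos 1) (le_trans (le_max_right H _) hC3)
    rwa [Real.log_exp] at this
  have hT0 : (0:ℝ) < T := by exact_mod_cast Nat.lt_of_lt_of_le Nat.zero_lt_one hT
  have hT1 : (1:ℝ) ≤ T := by exact_mod_cast hT
  set t : ℝ := Real.log T with htdef
  have ht : 0 ≤ t := Real.log_nonneg hT1
  set N : ℝ := t + (1 + Real.log C3) with hNdef
  have hN1 : 1 ≤ N := by simp only [hNdef]; linarith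
  set S : ℝ := Real.sqrt (C2 * T) with hSdef
  have hS0 : 0 ≤ S := Real.sqrt_nonneg _
  set P : ℝ := N ^ (2 * p + 1) with hPdef
  have hP1 : 1 ≤ P := one_le_pow₀ hN1
  have hfinal : ∀ s : ℝ, s ≤ S + C1 * N ^ (p + 1) + S * N ^ (2 * p) →
      s ≤ (S + C1) * (3 * P) := by
    intro s hs
    have hpow1 : N ^ (p + 1) ≤ P := pow_le_pow_right₀ hN1 (by omega)
    have hpow2 : N ^ (2 * p) ≤ P := pow_le_pow_right₀ hN1 (by omega)
    have f1 : C1 * N ^ (p + 1) ≤ C1 * P := by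
      apply mul_le_mul_of_nonneg_left hpow1 hC1pos.le
    have f2 : S * N ^ (2 * p) ≤ S * P := mul_le_mul_of_nonneg_left hpow2 hS0
    have f3 : S ≤ S * P := le_mul_of_one_le_right hS0 hP1
    have f4 : 0 ≤ C1 * P := by positivity
    have f5 : 0 ≤ S * P := by positivity
    nlinarith
  rcases le_or_gt C2 (H ^ 2 * T) with hcase | hcase
  · -- εmin = √C2/√T
    set ε₀ : ℝ := Real.sqrt C2 / Real.sqrt T with hε₀def
    have hsT : 0 < Real.sqrt T := Real.sqrt_pos.2 hT0
    have hsC2 : 0 < Real.sqrt C2 := Real.sqrt_pos.2 hC2pos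
    have hε₀pos : 0 < ε₀ := div_pos hsC2 hsT
    have hε₀H : ε₀ ≤ H := by
      rw [div_le_iff₀ hsT]
      have h1 : Real.sqrt C2 ≤ Real.sqrt (H ^ 2 * T) := Real.sqrt_le_sqrt hcase
      rwa [Real.sqrt_mul (sq_nonneg H), Real.sqrt_sq hH.le] at h1
    have hmem : ε₀ ∈ Set.Ioc (0:ℝ) H := ⟨hε₀pos, hε₀H⟩
    have key1 := regret_int H C1 C2 C3 p hH hC3pos Δ hΔ hmistake T ε₀ hmem
    have key2 := int_mb_le H C1 C2 C3 p hC1pos.le hC2pos.le hH hHC3 ε₀ hmem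
    have hTε : (T:ℝ) * ε₀ = S := by
      rw [hε₀def, hSdef, Real.sqrt_mul hC2pos.le]
      rw [show (T:ℝ) * (Real.sqrt C2 / Real.sqrt T)
          = Real.sqrt C2 * ((T:ℝ) / Real.sqrt T) by ring, Real.div_sqrt]
    have hC2ε : C2 / ε₀ = S := by
      rw [hε₀def, hSdef, Real.sqrt_mul hC2pos.le, div_div_eq_mul_div,
        mul_div_right_comm, Real.div_sqrt]
    set M : ℝ := Real.log (C3 / ε₀) with hMdef
    have hM0 : 0 ≤ M := Real.log_nonneg ((one_le_div hε₀pos).2 (hε₀H.trans hHC3))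
    have hsqT : Real.sqrt T ≤ (T:ℝ) := by
      have : Real.sqrt T ≤ Real.sqrt ((T:ℝ) ^ 2) := Real.sqrt_le_sqrt (by nlinarith)
      rwa [Real.sqrt_sq hT0.le] at this
    have hMN : M ≤ N := by
      have hsc1 : (1:ℝ) ≤ Real.sqrt C2 := by
        rw [show (1:ℝ) = Real.sqrt 1 by simp]
        exact Real.sqrt_le_sqrt (by linarith)
      have h1 : C3 / ε₀ ≤ C3 * T := by
        rw [hε₀def, div_div_eq_mul_div, mul_div_right_comm]
        calc C3 / Real.sqrt C2 * Real.sqrt T ≤ C3 * Real.sqrt T :=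
              mul_le_mul_of_nonneg_right (div_le_self hC3pos.le hsc1) (Real.sqrt_nonneg _)
          _ ≤ C3 * T := mul_le_mul_of_nonneg_left hsqT hC3pos.le
      have h2 : M ≤ Real.log (C3 * T) := Real.log_le_log (by positivity) h1
      rw [Real.log_mul (ne_of_gt hC3pos) (ne_of_gt hT0)] at h2
      simp only [hNdef, htdef]; linarith
    have hHε0 : 0 ≤ Real.log (H / ε₀) :=
      Real.log_nonneg ((one_le_div hε₀pos).2 hε₀H)
    have hHεN : Real.log (H / ε₀) ≤ N := by
      have h1 : Real.log (H / ε₀) ≤ M := by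
        apply Real.log_le_log (by positivity)
        gcongr
      linarith
    have hMpN : M ^ p ≤ N ^ p := pow_le_pow_left₀ hM0 hMN p
    have hM2pN : M ^ (2 * p) ≤ N ^ (2 * p) := pow_le_pow_left₀ hM0 hMN _
    apply hfinal
    have b1 : C1 * M ^ p * Real.log (H / ε₀) ≤ C1 * N ^ (p + 1) := by
      have : C1 * M ^ p * Real.log (H / ε₀) ≤ C1 * N ^ p * N := by
        apply mul_le_mul (mul_le_mul_of_nonneg_left hMpN hC1pos.le) hHεN hHε0
        positivity
      calc C1 * M ^ p * Real.log (H / ε₀) ≤ C1 * N ^ p * N := this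
        _ = C1 * N ^ (p + 1) := by ring
    have b2 : C2 * M ^ (2 * p) / ε₀ ≤ S * N ^ (2 * p) := by
      rw [mul_comm C2, mul_div_assoc, hC2ε]
      exact mul_le_mul_of_nonneg_right hM2pN hS0 |>.trans_eq (mul_comm _ _)
    calc ∑ j ∈ Finset.Icc 1 T, Δ j
        ≤ (T:ℝ) * ε₀ + (C1 * M ^ p * Real.log (H / ε₀)
            + C2 * M ^ (2 * p) / ε₀) := le_trans key1 (by linarith)
      _ ≤ S + C1 * N ^ (p + 1) + S * N ^ (2 * p) := by rw [hTε]; linarith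
  · -- small T case: ∑ ≤ T * H ≤ √(C2 T)
    have hsum : ∑ j ∈ Finset.Icc 1 T, Δ j ≤ (T:ℝ) * H := by
      have h := Finset.sum_le_card_nsmul (Finset.Icc 1 T) Δ H (fun j _ => (hΔ j).2)
      rw [Nat.card_Icc] at h
      simpa [nsmul_eq_mul] using h
    have hTH : (T:ℝ) * H ≤ S := by
      rw [hSdef]
      apply Real.le_sqrt_of_sq_le
      nlinarith [hcase.le, hT0, hH.le]
    apply hfinal
    have : 0 ≤ C1 * N ^ (p+1) := by positivity
    have : 0 ≤ S * N ^ (2*p) := by positivity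
    linarith

theorem stmt_11 (H C1 C2 C3 : ℝ) (p : ℕ) (hH : 0 < H)
    (hC12 : C2 ≤ C1) (hC2 : 2 ≤ C2) (hC3 : max H (Real.exp 1) ≤ C3)
    (Δ : ℕ → ℝ) (hΔ : ∀ j, Δ j ∈ Set.Icc 0 H)
    (hmistake : ∀ ε ∈ Set.Ioc (0:ℝ) H, ∀ T : ℕ,
      (((Finset.Icc 1 T).filter (fun j => Δ j > ε)).card : ℝ)
        ≤ mistakeBound C1 C2 C3 p ε) :
    (∀ T : ℕ, ∀ εmin ∈ Set.Ioc (0:ℝ) H, mistakeBound C1 C2 C3 p εmin ≤ T →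
        ∑ j ∈ Finset.Icc 1 T, Δ j
          ≤ T * εmin + ∫ ε in εmin..H, mistakeBound C1 C2 C3 p ε) ∧
    (∃ C : ℝ, ∃ q : ℕ, 0 ≤ C ∧ ∀ T : ℕ, 1 ≤ T →
        ∑ j ∈ Finset.Icc 1 T, Δ j
          ≤ (Real.sqrt (C2 * T) + C1) *
              ((Real.log (T * C3 * C1 * H)) ^ q + C)) := by
  have hHC3 : H ≤ C3 := le_trans (le_max_left _ _) hC3
  have hC3pos : 0 < C3 := lt_of_lt_of_le hH hHC3
  constructor
  · intro T εmin hε _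
    exact regret_int H C1 C2 C3 p hH hC3pos Δ hΔ hmistake T εmin hε
  · have hC2pos : (0:ℝ) < C2 := by linarith
    have hC1pos : (0:ℝ) < C1 := by linarith
    have hlogC3 : 1 ≤ Real.log C3 := by
      have := Real.log_le_log (Real.exp_pos 1) (le_trans (le_max_right H _) hC3)
      rwa [Real.log_exp] at this
    obtain ⟨C, hC0, hC⟩ := polydom (1 + Real.log C3)
      (Real.log C3 + Real.log C1 + Real.log H) (by linarith) (2 * p + 1)
    refine ⟨C, 2 * (2 * p + 1 + 1), hC0, fun T hT => ?_⟩
    have hT0 : (0:ℝ) < T := by exact_mod_cast Nat.lt_of_lt_of_le Nat.zero_lt_one hT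
    have hT1 : (1:ℝ) ≤ T := by exact_mod_cast hT
    have ht : 0 ≤ Real.log T := Real.log_nonneg hT1
    have hmain := main2 H C1 C2 C3 p hH hC12 hC2 hC3 Δ hΔ hmistake T hT
    have hXeq : Real.log (T * C3 * C1 * H)
        = Real.log T + (Real.log C3 + Real.log C1 + Real.log H) := by
      rw [Real.log_mul (by positivity) (ne_of_gt hH),
          Real.log_mul (by positivity) (ne_of_gt hC1pos),
          Real.log_mul (ne_of_gt hT0) (ne_of_gt hC3pos)]
      ring
    have hkey := hC (Real.log T) ht
    have hnn : 0 ≤ Real.sqrt (C2 * T) + C1 := by positivity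
    calc ∑ j ∈ Finset.Icc 1 T, Δ j
        ≤ (Real.sqrt (C2 * T) + C1)
            * (3 * (Real.log T + (1 + Real.log C3)) ^ (2 * p + 1)) := hmain
      _ ≤ (Real.sqrt (C2 * T) + C1)
            * ((Real.log T + (Real.log C3 + Real.log C1 + Real.log H))
                ^ (2 * (2 * p + 1 + 1)) + C) := by
          apply mul_le_mul_of_nonneg_left _ hnn
          linarith
      _ = _ := by rw [hXeq]
end
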